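/- In the product demand graph setting with demands d_i ≤ 1 for i in L and d_h = 1 for h in H, for any l ∈ L and h₁, h₂ ∈ H and any 0 < ε ≤ 1: e^{-4√ε}·(ε·L(h₂,l) + (1/2)L(h₁,h₂)) ⪯ ε·L(h₁,l) + (1/2)L(h₁,h₂) ⪯ e^{4√ε}·(ε·L(h₂,l) + (1/2)L(h₁,h₂)), where L(u,v) denotes d_u·d_v times the Laplacian of the unit edge {u,v}. -/

import Mathlib

open Matrix Finset

/-- The Laplacian of a single unit-weight edge `{u, v}`: `(e_u - e_v)(e_u - e_v)ᵀ`. -/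
def edgeLap {V : Type*} [DecidableEq V] (u v : V) : Matrix V V ℝ :=
  Matrix.of fun a b =>
    ((if a = u then (1 : ℝ) else 0) - (if a = v then 1 else 0)) *
    ((if b = u then (1 : ℝ) else 0) - (if b = v then 1 else 0))

lemma edgeLap_herm {V : Type*} [DecidableEq V] (u v : V) : (edgeLap u v).IsHermitian := by
  ext i j
  simp [edgeLap, Matrix.conjTranspose_apply, mul_comm]

lemma herm_smul {V : Type*} [Fintype V] [DecidableEq V] (c : ℝ) {A : Matrix V V ℝ}
    (h : A.IsHermitian) : (c • A).IsHermitian := by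
  show (c • A)ᴴ = c • A
  rw [conjTranspose_smul, star_trivial, h]

lemma edgeLap_quad {V : Type*} [Fintype V] [DecidableEq V] (u v : V) (x : V → ℝ) :
    x ⬝ᵥ (edgeLap u v *ᵥ x) = (x u - x v) ^ 2 := by
  have h : ∀ a, (edgeLap u v *ᵥ x) a =
      ((if a = u then (1:ℝ) else 0) - (if a = v then 1 else 0)) * (x u - x v) := by
    intro a
    simp [edgeLap, mulVec, dotProduct, sub_mul, mul_sub, Finset.sum_sub_distrib, ite_mul]
  simp only [dotProduct, h]
  simp [mul_sub, sub_mul, Finset.sum_sub_distrib, mul_ite, ite_mul]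
  ring

lemma key (ε c E r s : ℝ) (hc0 : 0 ≤ c) (hcε : c ≤ ε) (hε0 : 0 ≤ ε) (hε1 : ε ≤ 1)
    (hE : 1 + 4 * Real.sqrt ε ≤ E) :
    c * r ^ 2 + (1/2) * (r - s) ^ 2 ≤ E * (c * s ^ 2 + (1/2) * (r - s) ^ 2) := by
  set q := Real.sqrt ε with hq
  have hq0 : 0 ≤ q := Real.sqrt_nonneg ε
  have hq2 : q ^ 2 = ε := Real.sq_sqrt hε0
  have hq1 : q ≤ 1 := Real.sqrt_le_one.mpr hε1
  have hcq2 : c ≤ q ^ 2 := by rw [hq2]; exact hcε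
  have hqc : c ≤ q := le_trans hcq2 (by nlinarith)
  have hbase : 0 ≤ c * s ^ 2 + (1/2) * (r - s) ^ 2 := by positivity
  have hT : 0 ≤ 4*q*c*s^2 + 2*q*(r-s)^2 - 2*c*s*(r-s) - c*(r-s)^2 := by
    rcases hq0.eq_or_lt with h | h
    · have hc : c = 0 := le_antisymm (by nlinarith) hc0
      rw [hc, ← h]; ring_nf; exact le_rfl
    · have hqT : 0 ≤ q * (4*q*c*s^2 + 2*q*(r-s)^2 - 2*c*s*(r-s) - c*(r-s)^2) := by
        nlinarith [mul_nonneg hc0 (sq_nonneg (2*q*s - (r-s))),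
          mul_nonneg (mul_nonneg hq0 (sub_nonneg.2 hqc)) (sq_nonneg (r-s)),
          mul_nonneg (sub_nonneg.2 hcq2) (sq_nonneg (r-s)),
          mul_nonneg (mul_nonneg (sq_nonneg q) hc0) (sq_nonneg s),
          mul_nonneg (sq_nonneg q) (sq_nonneg (r-s))]
      nlinarith [hqT]
  have hstep : c * r ^ 2 + (1/2) * (r-s) ^ 2 ≤ (1 + 4 * q) * (c * s ^ 2 + (1/2) * (r-s) ^ 2) := by
    nlinarith [hT]
  calc c * r ^ 2 + (1/2) * (r-s) ^ 2 ≤ (1 + 4 * q) * (c * s ^ 2 + (1/2) * (r-s) ^ 2) := hstep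
    _ ≤ E * (c * s ^ 2 + (1/2) * (r-s) ^ 2) := by nlinarith

/-- In a product demand graph with demands `d` where `d l ≤ 1` and `d h₁ = d h₂ = 1`, for
`0 < ε ≤ 1` one has
`ε L(h₁,l) + ½ L(h₁,h₂) ≈_{4√ε} ε L(h₂,l) + ½ L(h₁,h₂)`,
where `L(u,v) = d_u d_v` times the Laplacian of the unit edge `{u,v}`. -/
theorem stmt_19 {V : Type*} [Fintype V] [DecidableEq V]
    (d : V → ℝ) (hd : ∀ v, 0 < d v)
    (l h₁ h₂ : V) (hl : d l ≤ 1) (hh₁ : d h₁ = 1) (hh₂ : d h₂ = 1)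
    (ε : ℝ) (hε0 : 0 < ε) (hε1 : ε ≤ 1) :
    ((ε • ((d h₁ * d l) • edgeLap h₁ l) + (1 / 2 : ℝ) • ((d h₁ * d h₂) • edgeLap h₁ h₂)) -
        Real.exp (-(4 * Real.sqrt ε)) •
          (ε • ((d h₂ * d l) • edgeLap h₂ l) +
            (1 / 2 : ℝ) • ((d h₁ * d h₂) • edgeLap h₁ h₂))).PosSemidef ∧
    (Real.exp (4 * Real.sqrt ε) •
          (ε • ((d h₂ * d l) • edgeLap h₂ l) +
            (1 / 2 : ℝ) • ((d h₁ * d h₂) • edgeLap h₁ h₂)) -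
        (ε • ((d h₁ * d l) • edgeLap h₁ l) +
          (1 / 2 : ℝ) • ((d h₁ * d h₂) • edgeLap h₁ h₂))).PosSemidef := by
  have hc0 : 0 ≤ ε * d l := le_of_lt (mul_pos hε0 (hd l))
  have hcε : ε * d l ≤ ε := by nlinarith [hd l]
  have hexp : 1 + 4 * Real.sqrt ε ≤ Real.exp (4 * Real.sqrt ε) := by
    have := Real.add_one_le_exp (4 * Real.sqrt ε); linarith
  have hEpos : (0:ℝ) < Real.exp (4 * Real.sqrt ε) := Real.exp_pos _
  have hempos : (0:ℝ) < Real.exp (-(4 * Real.sqrt ε)) := Real.exp_pos _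
  have hme : Real.exp (-(4 * Real.sqrt ε)) * Real.exp (4 * Real.sqrt ε) = 1 := by
    rw [← Real.exp_add]; simp
  have k1 : ∀ r s : ℝ, ε * d l * r ^ 2 + (1/2) * (r - s) ^ 2 ≤
      Real.exp (4 * Real.sqrt ε) * (ε * d l * s ^ 2 + (1/2) * (r - s) ^ 2) :=
    fun r s => key ε (ε * d l) _ r s hc0 hcε (le_of_lt hε0) hε1 hexp
  have hermA : ((ε • ((d h₁ * d l) • edgeLap h₁ l) +
      (1 / 2 : ℝ) • ((d h₁ * d h₂) • edgeLap h₁ h₂))).IsHermitian :=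
    (herm_smul _ (herm_smul _ (edgeLap_herm _ _))).add
      (herm_smul _ (herm_smul _ (edgeLap_herm _ _)))
  have hermB : ((ε • ((d h₂ * d l) • edgeLap h₂ l) +
      (1 / 2 : ℝ) • ((d h₁ * d h₂) • edgeLap h₁ h₂))).IsHermitian :=
    (herm_smul _ (herm_smul _ (edgeLap_herm _ _))).add
      (herm_smul _ (herm_smul _ (edgeLap_herm _ _)))
  constructor
  · refine .of_dotProduct_mulVec_nonneg (hermA.sub (herm_smul _ hermB)) fun x => ?_
    have hq : ∀ u v : V, x ⬝ᵥ (edgeLap u v *ᵥ x) = (x u - x v) ^ 2 := fun u v => edgeLap_quad u v x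
    simp only [star_trivial, sub_mulVec, add_mulVec, smul_mulVec, dotProduct_sub,
      dotProduct_add, dotProduct_smul, smul_eq_mul, hq, hh₁, hh₂, one_mul, mul_one]
    set r := x h₁ - x l
    set s := x h₂ - x l
    have hrs : x h₁ - x h₂ = r - s := by ring
    rw [hrs]
    have h := k1 s r
    have h2 : Real.exp (-(4 * Real.sqrt ε)) * (ε * d l * s ^ 2 + (1/2) * (s - r) ^ 2) ≤
        Real.exp (-(4 * Real.sqrt ε)) *
          (Real.exp (4 * Real.sqrt ε) * (ε * d l * r ^ 2 + (1/2) * (s - r) ^ 2)) :=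
      mul_le_mul_of_nonneg_left h (le_of_lt hempos)
    rw [← mul_assoc, hme, one_mul] at h2
    nlinarith [h2]
  · refine .of_dotProduct_mulVec_nonneg ((herm_smul _ hermB).sub hermA) fun x => ?_
    have hq : ∀ u v : V, x ⬝ᵥ (edgeLap u v *ᵥ x) = (x u - x v) ^ 2 := fun u v => edgeLap_quad u v x
    simp only [star_trivial, sub_mulVec, add_mulVec, smul_mulVec, dotProduct_sub,
      dotProduct_add, dotProduct_smul, smul_eq_mul, hq, hh₁, hh₂, one_mul, mul_one]
    set r := x h₁ - x l
    set s := x h₂ - x l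
    have hrs : x h₁ - x h₂ = r - s := by ring
    rw [hrs]
    have h := k1 r s
    nlinarith [h]
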